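/- Let n ≥ 3 be an integer and let G be the Cartesian product K_n □ P_3, i.e., the graph with vertex set {v_{i,p} : i ∈ {1,2,3}, 1 ≤ p ≤ n} where for each i the vertices v_{i,1}, …, v_{i,n} form a complete graph K_n, and additionally v_{1,p} is adjacent to v_{2,p} and v_{2,p} is adjacent to v_{3,p} for each 1 ≤ p ≤ n. Then G is a non-regular minimally ((n+1)/3)-tough graph with minimum degree n and maximum degree n + 1. -/

import Mathlib

open SimpleGraph

/-- `numComp G S` is ω(G − S): the number of connected components of the graph
obtained from `G` by deleting the vertex set `S`. -/
noncomputable def numComp {V : Type*} (G : SimpleGraph V) (S : Set V) : ℕ :=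
  Nat.card (G.induce Sᶜ).ConnectedComponent

/-- `G` is `t`-tough: whenever deleting `S` leaves at least two components,
`|S| ≥ t · ω(G − S)`. -/
def Tough {V : Type*} (t : ℝ) (G : SimpleGraph V) : Prop :=
  ∀ S : Set V, 2 ≤ numComp G S → t * (numComp G S : ℝ) ≤ (S.ncard : ℝ)

/-- `G` is minimally `t`-tough: `G` is `t`-tough and deleting any edge destroys
`t`-toughness. -/
def MinTough {V : Type*} (t : ℝ) (G : SimpleGraph V) : Prop :=
  Tough t G ∧ ∀ e ∈ G.edgeSet, ¬ Tough t (G.deleteEdges {e})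

/-- The degree of a vertex, as the cardinality of its neighbor set. -/
noncomputable def ndeg {V : Type*} (G : SimpleGraph V) (v : V) : ℕ :=
  (G.neighborSet v).ncard

/-- The Cartesian product `K_n □ P_3`: three copies of `K_n` (indexed by the
first coordinate `i : Fin 3`), with `v_{1,p} ~ v_{2,p}` and `v_{2,p} ~ v_{3,p}`
for every `p` (paper indices `1,2,3` correspond to `0,1,2`). -/
def knp3 (n : ℕ) : SimpleGraph (Fin 3 × Fin n) :=
  SimpleGraph.fromRel (fun x y =>
    (x.1 = y.1 ∧ x.2 ≠ y.2) ∨ (x.2 = y.2 ∧ x.1.val + 1 = y.1.val))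

lemma knp3_adj {n : ℕ} {x y : Fin 3 × Fin n} :
    (knp3 n).Adj x y ↔ x ≠ y ∧
      ((x.1 = y.1 ∧ x.2 ≠ y.2) ∨
       (x.2 = y.2 ∧ (x.1.val + 1 = y.1.val ∨ y.1.val + 1 = x.1.val))) := by
  simp only [knp3, fromRel_adj]
  tauto

lemma nbr0 {n : ℕ} (p : Fin n) : (knp3 n).neighborSet ((0:Fin 3), p) =
    ↑((({p}ᶜ : Finset (Fin n)).image (fun r => ((0:Fin 3), r))) ∪ {((1:Fin 3), p)}) := by
  ext ⟨i, r⟩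
  simp only [mem_neighborSet, knp3_adj, Finset.coe_union, Finset.coe_image, Finset.coe_singleton,
    Set.mem_union, Set.mem_image, Finset.mem_coe, Finset.mem_compl, Finset.mem_singleton,
    Set.mem_singleton_iff]
  constructor
  · rintro ⟨hne, ⟨h1, h2⟩ | ⟨h1, h2 | h2⟩⟩
    · exact Or.inl ⟨r, by simpa using h2.symm, by rw [← h1]⟩
    · right; fin_cases i <;> simp_all
    · right; fin_cases i <;> simp_all
  · rintro (⟨s, hs, heq⟩ | heq)
    · cases heq
      exact ⟨by simp [Prod.ext_iff, Ne.symm hs], Or.inl ⟨rfl, Ne.symm hs⟩⟩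
    · obtain ⟨rfl, rfl⟩ : i = 1 ∧ r = p := by simpa [Prod.ext_iff] using heq
      exact ⟨by simp [Prod.ext_iff], Or.inr ⟨rfl, Or.inl rfl⟩⟩

lemma nbr2 {n : ℕ} (p : Fin n) : (knp3 n).neighborSet ((2:Fin 3), p) =
    ↑((({p}ᶜ : Finset (Fin n)).image (fun r => ((2:Fin 3), r))) ∪ {((1:Fin 3), p)}) := by
  ext ⟨i, r⟩
  simp only [mem_neighborSet, knp3_adj, Finset.coe_union, Finset.coe_image, Finset.coe_singleton,
    Set.mem_union, Set.mem_image, Finset.mem_coe, Finset.mem_compl, Finset.mem_singleton,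
    Set.mem_singleton_iff]
  constructor
  · rintro ⟨hne, ⟨h1, h2⟩ | ⟨h1, h2 | h2⟩⟩
    · exact Or.inl ⟨r, by simpa using h2.symm, by rw [← h1]⟩
    · right; fin_cases i <;> simp_all
    · right; fin_cases i <;> simp_all
  · rintro (⟨s, hs, heq⟩ | heq)
    · cases heq
      exact ⟨by simp [Prod.ext_iff, Ne.symm hs], Or.inl ⟨rfl, Ne.symm hs⟩⟩
    · obtain ⟨rfl, rfl⟩ : i = 1 ∧ r = p := by simpa [Prod.ext_iff] using heq
      exact ⟨by simp [Prod.ext_iff], Or.inr ⟨rfl, Or.inr rfl⟩⟩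

lemma nbr1 {n : ℕ} (p : Fin n) : (knp3 n).neighborSet ((1:Fin 3), p) =
    ↑((({p}ᶜ : Finset (Fin n)).image (fun r => ((1:Fin 3), r))) ∪ {((0:Fin 3), p), ((2:Fin 3), p)}) := by
  ext ⟨i, r⟩
  simp only [mem_neighborSet, knp3_adj, Finset.coe_union, Finset.coe_image,
    Set.mem_union, Set.mem_image, Finset.mem_coe, Finset.mem_compl, Finset.mem_singleton,
    Finset.coe_insert, Set.mem_insert_iff, Finset.coe_singleton, Set.mem_singleton_iff]
  constructor
  · rintro ⟨hne, ⟨h1, h2⟩ | ⟨h1, h2 | h2⟩⟩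
    · exact Or.inl ⟨r, by simpa using h2.symm, by rw [← h1]⟩
    · right; fin_cases i <;> simp_all
    · right; fin_cases i <;> simp_all
  · rintro (⟨s, hs, heq⟩ | heq | heq)
    · cases heq
      exact ⟨by simp [Prod.ext_iff, Ne.symm hs], Or.inl ⟨rfl, Ne.symm hs⟩⟩
    · obtain ⟨rfl, rfl⟩ : i = 0 ∧ r = p := by simpa [Prod.ext_iff] using heq
      exact ⟨by simp [Prod.ext_iff], Or.inr ⟨rfl, Or.inr rfl⟩⟩
    · obtain ⟨rfl, rfl⟩ : i = 2 ∧ r = p := by simpa [Prod.ext_iff] using heq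
      exact ⟨by simp [Prod.ext_iff], Or.inr ⟨rfl, Or.inl rfl⟩⟩

lemma ndeg0 {n : ℕ} (hn : 1 ≤ n) (p : Fin n) : ndeg (knp3 n) ((0:Fin 3), p) = n := by
  rw [ndeg, nbr0, Set.ncard_coe_finset, Finset.card_union_of_disjoint, Finset.card_image_of_injective,
    Finset.card_compl]
  · simp; omega
  · intro a b hab; simpa [Prod.ext_iff] using hab
  · simp [Finset.disjoint_left, Prod.ext_iff]; tauto

lemma ndeg2 {n : ℕ} (hn : 1 ≤ n) (p : Fin n) : ndeg (knp3 n) ((2:Fin 3), p) = n := by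
  rw [ndeg, nbr2, Set.ncard_coe_finset, Finset.card_union_of_disjoint, Finset.card_image_of_injective,
    Finset.card_compl]
  · simp; omega
  · intro a b hab; simpa [Prod.ext_iff] using hab
  · simp [Finset.disjoint_left, Prod.ext_iff]; tauto

lemma ndeg1 {n : ℕ} (hn : 1 ≤ n) (p : Fin n) : ndeg (knp3 n) ((1:Fin 3), p) = n + 1 := by
  rw [ndeg, nbr1, Set.ncard_coe_finset, Finset.card_union_of_disjoint, Finset.card_image_of_injective,
    Finset.card_compl]
  · simp; omega
  · intro a b hab; simpa [Prod.ext_iff] using hab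
  · simp [Finset.disjoint_left, Prod.ext_iff]; tauto

lemma walk_const {W : Type*} {G : SimpleGraph W} {β : Type*} (f : W → β)
    (hf : ∀ a b, G.Adj a b → f a = f b) {u v : W} (p : G.Walk u v) : f u = f v := by
  induction p with
  | nil => rfl
  | cons h _ ih => exact (hf _ _ h).trans ih

lemma comp_ge {W : Type*} [Finite W] (G : SimpleGraph W) (S : Set W) {k : ℕ} (f : W → Fin k)
    (hconst : ∀ u v : W, u ∈ Sᶜ → v ∈ Sᶜ → G.Adj u v → f u = f v)
    (hsurj : ∀ i : Fin k, ∃ v ∈ Sᶜ, f v = i) :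
    k ≤ numComp G S := by
  have hconst' : ∀ a b : ↥Sᶜ, (G.induce Sᶜ).Adj a b → f a.val = f b.val := by
    intro a b hab
    exact hconst _ _ a.2 b.2 hab
  let g : (G.induce Sᶜ).ConnectedComponent → Fin k :=
    Quot.lift (fun v => f v.val) (fun a b hab => hab.elim (fun p => walk_const _ hconst' p))
  have hg : Function.Surjective g := by
    intro i
    obtain ⟨v, hv, hfv⟩ := hsurj i
    exact ⟨Quot.mk _ ⟨v, hv⟩, hfv⟩
  simpa [numComp] using Nat.card_le_card_of_surjective g hg

lemma ncard_le_of_injOn {α β : Type*} [Finite β] (S : Set α) (g : α → β)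
    (hg : Set.InjOn g S) : S.ncard ≤ Nat.card β := by
  calc S.ncard = (g '' S).ncard := (Set.ncard_image_of_injOn hg).symm
  _ ≤ (Set.univ : Set β).ncard := Set.ncard_le_ncard (Set.subset_univ _) (Set.toFinite _)
  _ = Nat.card β := Set.ncard_univ β

lemma hitcard {n : ℕ} {S : Set (Fin 3 × Fin n)} (hit : ∀ p : Fin n, ∃ i, (i, p) ∈ S) : n ≤ S.ncard := by
  classical
  rw [Set.ncard_eq_toFinset_card S S.toFinite]
  rw [Finset.card_eq_sum_card_fiberwise (f := Prod.snd) (t := Finset.univ) (fun x _ => Finset.mem_univ _)]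
  calc n = ∑ _p : Fin n, 1 := by simp
  _ ≤ _ := by
    apply Finset.sum_le_sum
    intro p _
    apply Finset.card_pos.mpr
    obtain ⟨i, hi⟩ := hit p
    exact ⟨(i, p), by simp [Set.Finite.mem_toFinset]; exact hi⟩

lemma hitcard2 {n : ℕ} {S : Set (Fin 3 × Fin n)} (hit : ∀ p : Fin n, ∃ i, (i, p) ∈ S) {q : Fin n}
    (h0 : ((0 : Fin 3), q) ∈ S) (h2 : ((2 : Fin 3), q) ∈ S) : n + 1 ≤ S.ncard := by
  classical
  rw [Set.ncard_eq_toFinset_card S S.toFinite]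
  rw [Finset.card_eq_sum_card_fiberwise (f := Prod.snd) (t := Finset.univ) (fun x _ => Finset.mem_univ _)]
  have : ∑ _p : Fin n, 1 < ∑ p : Fin n,
      (S.toFinite.toFinset.filter (fun x => x.2 = p)).card := by
    apply Finset.sum_lt_sum
    · intro p _
      apply Finset.card_pos.mpr
      obtain ⟨i, hi⟩ := hit p
      exact ⟨(i, p), by simp [Set.Finite.mem_toFinset]; exact hi⟩
    · refine ⟨q, Finset.mem_univ _, ?_⟩
      apply Finset.one_lt_card.mpr
      refine ⟨((0:Fin 3), q), by simp [Set.Finite.mem_toFinset]; exact h0, ((2:Fin 3), q),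
        by simp [Set.Finite.mem_toFinset]; exact h2, by simp⟩
  simpa using this

lemma knp3_tough {n : ℕ} (hn : 3 ≤ n) : Tough (((n : ℝ) + 1) / 3) (knp3 n) := by
  intro S h2
  set G' := (knp3 n).induce Sᶜ with hG'
  -- row reachability
  have row_reach : ∀ u v : ↥Sᶜ, (u.val).1 = (v.val).1 → G'.Reachable u v := by
    intro u v h
    by_cases huv : u = v
    · exact huv ▸ Reachable.refl u
    have : G'.Adj u v := by
      show (knp3 n).Adj u.val v.val
      refine knp3_adj.mpr ⟨fun hh => huv (Subtype.ext hh), Or.inl ⟨h, ?_⟩⟩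
      intro hc
      exact huv (Subtype.ext (Prod.ext h hc))
    exact this.reachable
  -- injection of components into Fin 3
  have hψinj : Function.Injective (fun c : G'.ConnectedComponent => (Quot.out c).val.1) := by
    intro c c' h
    have := row_reach (Quot.out c) (Quot.out c') h
    rw [← Quot.out_eq c, ← Quot.out_eq c']
    exact Quot.sound this
  have hle3 : numComp (knp3 n) S ≤ 3 := by
    have := Nat.card_le_card_of_injective _ hψinj
    simpa [numComp] using this
  -- every column meets S
  have hit : ∀ p : Fin n, ∃ i, (i, p) ∈ S := by
    intro p
    by_contra hc
    push_neg at hc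
    have hmem : ∀ i : Fin 3, (i, p) ∈ Sᶜ := fun i => hc i
    have adj01 : G'.Adj ⟨(0, p), hmem 0⟩ ⟨(1, p), hmem 1⟩ := by
      show (knp3 n).Adj _ _
      exact knp3_adj.mpr ⟨by simp [Prod.ext_iff], Or.inr ⟨rfl, Or.inl rfl⟩⟩
    have adj12 : G'.Adj ⟨(1, p), hmem 1⟩ ⟨(2, p), hmem 2⟩ := by
      show (knp3 n).Adj _ _
      exact knp3_adj.mpr ⟨by simp [Prod.ext_iff], Or.inr ⟨rfl, Or.inl rfl⟩⟩
    have key : ∀ i j : Fin 3, G'.Reachable ⟨(i, p), hmem i⟩ ⟨(j, p), hmem j⟩ := by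
      intro i j
      fin_cases i <;> fin_cases j
      · rfl
      · exact adj01.reachable
      · exact (adj01.reachable.trans adj12.reachable)
      · exact adj01.reachable.symm
      · rfl
      · exact adj12.reachable
      · exact (adj01.reachable.trans adj12.reachable).symm
      · exact adj12.reachable.symm
      · rfl
    have hall : ∀ u v : ↥Sᶜ, G'.Reachable u v := by
      intro u v
      exact ((row_reach u ⟨(u.val.1, p), hmem _⟩ rfl).trans
        (key u.val.1 v.val.1)).trans (row_reach ⟨(v.val.1, p), hmem _⟩ v rfl)
    have : Subsingleton G'.ConnectedComponent := by
      constructor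
      intro a b
      induction a using Quot.ind
      induction b using Quot.ind
      exact Quot.sound (hall _ _)
    have hss : Subsingleton G'.ConnectedComponent := this
    have : numComp (knp3 n) S ≤ 1 := by
      simp only [numComp]
      rw [← hG']
      rcases isEmpty_or_nonempty G'.ConnectedComponent with h | ⟨⟨a⟩⟩
      · simp [Nat.card_of_isEmpty]
      · rw [Nat.card_of_subsingleton a]
    omega
  have hcases : numComp (knp3 n) S = 2 ∨ numComp (knp3 n) S = 3 := by omega
  have hn' : (3 : ℝ) ≤ (n : ℝ) := by exact_mod_cast hn
  rcases hcases with hw | hw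
  · have hS : (n : ℝ) ≤ S.ncard := by exact_mod_cast hitcard hit
    rw [hw]
    push_cast
    linarith
  · -- ω = 3 : ψ is bijective
    have hψbij : Function.Bijective (fun c : G'.ConnectedComponent => (Quot.out c).val.1) := by
      refine (Nat.bijective_iff_injective_and_card _).mpr ⟨hψinj, ?_⟩
      simp only [Nat.card_eq_fintype_card (α := Fin 3), Fintype.card_fin]
      simpa [numComp] using hw
    obtain ⟨c0, hc0⟩ := hψbij.2 0
    obtain ⟨c1, hc1⟩ := hψbij.2 1
    obtain ⟨c2, hc2⟩ := hψbij.2 2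
    set u0 := Quot.out c0
    set u1 := Quot.out c1
    set u2 := Quot.out c2
    set q := u1.val.2 with hq
    have hu1 : u1.val = ((1 : Fin 3), q) := Prod.ext hc1 rfl
    have hsep : ∀ (i : Fin 3) (c : G'.ConnectedComponent), (Quot.out c).val.1 = i →
        c ≠ c1 → ((i, q) : Fin 3 × Fin n) ∈ Sᶜ → ((knp3 n).Adj (i, q) u1.val) → False := by
      intro i c hc hne hmem hadj
      have r1 : G'.Reachable (Quot.out c) ⟨(i, q), hmem⟩ := row_reach _ _ (by simp [hc])
      have r2 : G'.Reachable ⟨(i, q), hmem⟩ u1 := (by exact hadj : G'.Adj ⟨(i,q), hmem⟩ u1).reachable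
      have : c = c1 := by
        rw [← Quot.out_eq c, ← Quot.out_eq c1]
        exact Quot.sound (r1.trans r2)
      exact hne this
    have hne01 : c0 ≠ c1 := fun h => by rw [h, hc1] at hc0; exact absurd hc0 (by decide)
    have hne21 : c2 ≠ c1 := fun h => by rw [h, hc1] at hc2; exact absurd hc2 (by decide)
    have h0q : ((0 : Fin 3), q) ∈ S := by
      by_contra h
      exact hsep 0 c0 hc0 hne01 h
        (knp3_adj.mpr ⟨by simp [hu1, Prod.ext_iff], Or.inr ⟨by simp [hu1], Or.inl (by simp [hu1])⟩⟩)
    have h2q : ((2 : Fin 3), q) ∈ S := by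
      by_contra h
      exact hsep 2 c2 hc2 hne21 h
        (knp3_adj.mpr ⟨by simp [hu1, Prod.ext_iff], Or.inr ⟨by simp [hu1], Or.inr (by simp [hu1])⟩⟩)
    have hS : (n : ℝ) + 1 ≤ S.ncard := by exact_mod_cast hitcard2 hit h0q h2q
    rw [hw]
    push_cast
    linarith

lemma cert_v01 {n : ℕ} (hn : 3 ≤ n) (p : Fin n) :
    ¬ Tough (((n:ℝ)+1)/3) ((knp3 n).deleteEdges {s(((0:Fin 3),p), ((1:Fin 3),p))}) := by
  intro hT
  set G := (knp3 n).deleteEdges {s(((0:Fin 3),p), ((1:Fin 3),p))} with hG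
  set S : Set (Fin 3 × Fin n) := {x | (x.1 = 1 ∧ x.2 ≠ p) ∨ x = (2, p)} with hS
  have hω : 3 ≤ numComp G S := by
    apply comp_ge G S (fun x => if x.1 = 0 then 0 else if x = (1, p) then 1 else 2)
    · rintro ⟨i, r⟩ ⟨j, s⟩ hu hv hadj
      rw [hG, deleteEdges_adj, Set.mem_singleton_iff, Sym2.eq_iff] at hadj
      obtain ⟨hadj, hne⟩ := hadj
      obtain ⟨hne', hor⟩ := knp3_adj.mp hadj
      simp only [hS, Set.mem_compl_iff, Set.mem_setOf_eq, Prod.mk.injEq, not_or, not_and] at hu hv hne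
      fin_cases i <;> fin_cases j <;>
        simp_all [Prod.ext_iff] <;> tauto
    · intro i
      fin_cases i
      · exact ⟨(0, p), by simp [hS, Prod.ext_iff], by simp⟩
      · exact ⟨(1, p), by simp [hS, Prod.ext_iff], by simp [Prod.ext_iff]⟩
      · obtain ⟨q, hq⟩ : ∃ q : Fin n, q ≠ p := by
          have : Nontrivial (Fin n) := Fin.nontrivial_iff_two_le.mpr (by omega)
          exact exists_ne p
        exact ⟨(2, q), by simp [hS, Prod.ext_iff, hq], by simp [Prod.ext_iff, hq]⟩
  have hcard : S.ncard ≤ n := by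
    have := ncard_le_of_injOn S (fun x => x.2) ?_
    · simpa using this
    · rintro ⟨i, r⟩ hu ⟨j, s⟩ hv h
      simp only [hS, Set.mem_setOf_eq, Prod.mk.injEq] at hu hv h
      subst h
      rcases hu with ⟨hi, hr⟩ | ⟨hi, rfl⟩ <;> rcases hv with ⟨hj, hs⟩ | ⟨hj, h⟩ <;>
        simp_all [Prod.ext_iff]
  have h2 : 2 ≤ numComp G S := by omega
  have hineq := hT S h2
  have h3 : ((n:ℝ)+1)/3 * 3 ≤ ((n:ℝ)+1)/3 * (numComp G S : ℝ) := by
    apply mul_le_mul_of_nonneg_left (by exact_mod_cast hω) (by positivity)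
  have hcard' : (S.ncard : ℝ) ≤ (n : ℝ) := by exact_mod_cast hcard
  have : ((n:ℝ)+1)/3 * 3 = (n:ℝ)+1 := by ring
  linarith

lemma cert_v12 {n : ℕ} (hn : 3 ≤ n) (p : Fin n) :
    ¬ Tough (((n:ℝ)+1)/3) ((knp3 n).deleteEdges {s(((1:Fin 3),p), ((2:Fin 3),p))}) := by
  intro hT
  set G := (knp3 n).deleteEdges {s(((1:Fin 3),p), ((2:Fin 3),p))} with hG
  set S : Set (Fin 3 × Fin n) := {x | (x.1 = 1 ∧ x.2 ≠ p) ∨ x = (0, p)} with hS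
  have hω : 3 ≤ numComp G S := by
    apply comp_ge G S (fun x => if x.1 = 2 then 0 else if x = (1, p) then 1 else 2)
    · rintro ⟨i, r⟩ ⟨j, s⟩ hu hv hadj
      rw [hG, deleteEdges_adj, Set.mem_singleton_iff, Sym2.eq_iff] at hadj
      obtain ⟨hadj, hne⟩ := hadj
      obtain ⟨hne', hor⟩ := knp3_adj.mp hadj
      simp only [hS, Set.mem_compl_iff, Set.mem_setOf_eq, Prod.mk.injEq, not_or, not_and] at hu hv hne
      fin_cases i <;> fin_cases j <;> simp_all [Prod.ext_iff] <;>
        split_ifs <;> simp_all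
    · intro i
      fin_cases i
      · exact ⟨(2, p), by simp [hS, Prod.ext_iff], by simp⟩
      · exact ⟨(1, p), by simp [hS, Prod.ext_iff], by simp [Prod.ext_iff]⟩
      · obtain ⟨q, hq⟩ : ∃ q : Fin n, q ≠ p := by
          have : Nontrivial (Fin n) := Fin.nontrivial_iff_two_le.mpr (by omega)
          exact exists_ne p
        exact ⟨(0, q), by simp [hS, Prod.ext_iff, hq], by simp [Prod.ext_iff, hq]⟩
  have hcard : S.ncard ≤ n := by
    have := ncard_le_of_injOn S (fun x => x.2) ?_
    · simpa using this
    · rintro ⟨i, r⟩ hu ⟨j, s⟩ hv h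
      simp only [hS, Set.mem_setOf_eq, Prod.mk.injEq] at hu hv h
      subst h
      rcases hu with ⟨hi, hr⟩ | ⟨hi, rfl⟩ <;> rcases hv with ⟨hj, hs⟩ | ⟨hj, h⟩ <;>
        simp_all [Prod.ext_iff]
  have h2 : 2 ≤ numComp G S := by omega
  have hineq := hT S h2
  have h3 : ((n:ℝ)+1)/3 * 3 ≤ ((n:ℝ)+1)/3 * (numComp G S : ℝ) := by
    apply mul_le_mul_of_nonneg_left (by exact_mod_cast hω) (by positivity)
  have hcard' : (S.ncard : ℝ) ≤ (n : ℝ) := by exact_mod_cast hcard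
  have : ((n:ℝ)+1)/3 * 3 = (n:ℝ)+1 := by ring
  linarith

lemma cert_row0 {n : ℕ} (hn : 3 ≤ n) (p q : Fin n) (hpq : p ≠ q) :
    ¬ Tough (((n:ℝ)+1)/3) ((knp3 n).deleteEdges {s(((0:Fin 3),p), ((0:Fin 3),q))}) := by
  intro hT
  set G := (knp3 n).deleteEdges {s(((0:Fin 3),p), ((0:Fin 3),q))} with hG
  set S : Set (Fin 3 × Fin n) :=
    {x | (x.1 = 0 ∧ x.2 ≠ p ∧ x.2 ≠ q) ∨ x = (1, p) ∨ x = (1, q)} with hS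
  have hω : 3 ≤ numComp G S := by
    apply comp_ge G S (fun x => if x = (0, p) then 0 else if x = (0, q) then 1 else 2)
    · rintro ⟨i, r⟩ ⟨j, s⟩ hu hv hadj
      rw [hG, deleteEdges_adj, Set.mem_singleton_iff, Sym2.eq_iff] at hadj
      obtain ⟨hadj, hne⟩ := hadj
      obtain ⟨hne', hor⟩ := knp3_adj.mp hadj
      simp only [hS, Set.mem_compl_iff, Set.mem_setOf_eq, Prod.mk.injEq, not_or, not_and] at hu hv hne
      fin_cases i <;> fin_cases j <;> simp_all [Prod.ext_iff] <;>
        split_ifs <;> simp_all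
    · intro i
      fin_cases i
      · exact ⟨(0, p), by simp [hS, Prod.ext_iff, hpq], by simp⟩
      · exact ⟨(0, q), by simp [hS, Prod.ext_iff, Ne.symm hpq], by simp [Prod.ext_iff, Ne.symm hpq]⟩
      · exact ⟨(2, p), by simp [hS, Prod.ext_iff], by simp [Prod.ext_iff]⟩
  have hcard : S.ncard ≤ n := by
    have := ncard_le_of_injOn S (fun x => x.2) ?_
    · simpa using this
    · rintro ⟨i, r⟩ hu ⟨j, s⟩ hv h
      simp only [hS, Set.mem_setOf_eq, Prod.mk.injEq] at hu hv h
      subst h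
      rcases hu with ⟨hi, hr⟩ | (⟨hi, rfl⟩ | ⟨hi, rfl⟩) <;>
        rcases hv with ⟨hj, hs⟩ | (⟨hj, h⟩ | ⟨hj, h⟩) <;> simp_all [Prod.ext_iff]
  have h2 : 2 ≤ numComp G S := by omega
  have hineq := hT S h2
  have h3 : ((n:ℝ)+1)/3 * 3 ≤ ((n:ℝ)+1)/3 * (numComp G S : ℝ) := by
    apply mul_le_mul_of_nonneg_left (by exact_mod_cast hω) (by positivity)
  have hcard' : (S.ncard : ℝ) ≤ (n : ℝ) := by exact_mod_cast hcard
  have : ((n:ℝ)+1)/3 * 3 = (n:ℝ)+1 := by ring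
  linarith

lemma cert_row2 {n : ℕ} (hn : 3 ≤ n) (p q : Fin n) (hpq : p ≠ q) :
    ¬ Tough (((n:ℝ)+1)/3) ((knp3 n).deleteEdges {s(((2:Fin 3),p), ((2:Fin 3),q))}) := by
  intro hT
  set G := (knp3 n).deleteEdges {s(((2:Fin 3),p), ((2:Fin 3),q))} with hG
  set S : Set (Fin 3 × Fin n) :=
    {x | (x.1 = 2 ∧ x.2 ≠ p ∧ x.2 ≠ q) ∨ x = (1, p) ∨ x = (1, q)} with hS
  have hω : 3 ≤ numComp G S := by
    apply comp_ge G S (fun x => if x = (2, p) then 0 else if x = (2, q) then 1 else 2)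
    · rintro ⟨i, r⟩ ⟨j, s⟩ hu hv hadj
      rw [hG, deleteEdges_adj, Set.mem_singleton_iff, Sym2.eq_iff] at hadj
      obtain ⟨hadj, hne⟩ := hadj
      obtain ⟨hne', hor⟩ := knp3_adj.mp hadj
      simp only [hS, Set.mem_compl_iff, Set.mem_setOf_eq, Prod.mk.injEq, not_or, not_and] at hu hv hne
      fin_cases i <;> fin_cases j <;> simp_all [Prod.ext_iff] <;>
        split_ifs <;> simp_all
    · intro i
      fin_cases i
      · exact ⟨(2, p), by simp [hS, Prod.ext_iff, hpq], by simp⟩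
      · exact ⟨(2, q), by simp [hS, Prod.ext_iff, Ne.symm hpq], by simp [Prod.ext_iff, Ne.symm hpq]⟩
      · exact ⟨(0, p), by simp [hS, Prod.ext_iff], by simp [Prod.ext_iff]⟩
  have hcard : S.ncard ≤ n := by
    have := ncard_le_of_injOn S (fun x => x.2) ?_
    · simpa using this
    · rintro ⟨i, r⟩ hu ⟨j, s⟩ hv h
      simp only [hS, Set.mem_setOf_eq, Prod.mk.injEq] at hu hv h
      subst h
      rcases hu with ⟨hi, hr⟩ | (⟨hi, rfl⟩ | ⟨hi, rfl⟩) <;>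
        rcases hv with ⟨hj, hs⟩ | (⟨hj, h⟩ | ⟨hj, h⟩) <;> simp_all [Prod.ext_iff]
  have h2 : 2 ≤ numComp G S := by omega
  have hineq := hT S h2
  have h3 : ((n:ℝ)+1)/3 * 3 ≤ ((n:ℝ)+1)/3 * (numComp G S : ℝ) := by
    apply mul_le_mul_of_nonneg_left (by exact_mod_cast hω) (by positivity)
  have hcard' : (S.ncard : ℝ) ≤ (n : ℝ) := by exact_mod_cast hcard
  have : ((n:ℝ)+1)/3 * 3 = (n:ℝ)+1 := by ring
  linarith

lemma cert_row1 {n : ℕ} (hn : 3 ≤ n) (p q : Fin n) (hpq : p ≠ q) :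
    ¬ Tough (((n:ℝ)+1)/3) ((knp3 n).deleteEdges {s(((1:Fin 3),p), ((1:Fin 3),q))}) := by
  intro hT
  set G := (knp3 n).deleteEdges {s(((1:Fin 3),p), ((1:Fin 3),q))} with hG
  set S : Set (Fin 3 × Fin n) :=
    {x | (x.1 = 1 ∧ x.2 ≠ p ∧ x.2 ≠ q) ∨ x = (0, p) ∨ x = (0, q) ∨ x = (2, p) ∨ x = (2, q)}
    with hS
  obtain ⟨r, hrp, hrq⟩ : ∃ r : Fin n, r ≠ p ∧ r ≠ q := by
    classical
    have hcompl : (({p, q} : Finset (Fin n))ᶜ).Nonempty := by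
      apply Finset.card_pos.mp
      rw [Finset.card_compl]
      have : ({p, q} : Finset (Fin n)).card ≤ 2 := Finset.card_insert_le _ _ |>.trans (by simp)
      simp only [Fintype.card_fin]
      omega
    obtain ⟨r, hr⟩ := hcompl
    simp only [Finset.mem_compl, Finset.mem_insert, Finset.mem_singleton, not_or] at hr
    exact ⟨r, hr.1, hr.2⟩
  have hω : 4 ≤ numComp G S := by
    apply comp_ge G S
      (fun x => if x = (1, p) then 0 else if x = (1, q) then 1 else if x.1 = 0 then 2 else 3)
    · rintro ⟨i, r'⟩ ⟨j, s⟩ hu hv hadj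
      rw [hG, deleteEdges_adj, Set.mem_singleton_iff, Sym2.eq_iff] at hadj
      obtain ⟨hadj, hne⟩ := hadj
      obtain ⟨hne', hor⟩ := knp3_adj.mp hadj
      simp only [hS, Set.mem_compl_iff, Set.mem_setOf_eq, Prod.mk.injEq, not_or, not_and] at hu hv hne
      fin_cases i <;> fin_cases j <;> simp_all [Prod.ext_iff] <;>
        split_ifs <;> simp_all
    · intro i
      fin_cases i
      · exact ⟨(1, p), by simp [hS, Prod.ext_iff, hpq], by simp⟩
      · exact ⟨(1, q), by simp [hS, Prod.ext_iff, Ne.symm hpq], by simp [Prod.ext_iff, Ne.symm hpq]⟩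
      · exact ⟨(0, r), by simp [hS, Prod.ext_iff, hrp, hrq], by simp [Prod.ext_iff, hrp, hrq]⟩
      · exact ⟨(2, r), by simp [hS, Prod.ext_iff, hrp, hrq], by simp [Prod.ext_iff, hrp, hrq]⟩
  have hcard : S.ncard ≤ n + 2 := by
    have := ncard_le_of_injOn S
      (fun x => if x.1 = 2 then Sum.inr (if x.2 = p then (0 : Fin 2) else 1) else Sum.inl x.2) ?_
    · simpa [Nat.card_eq_fintype_card] using this
    · rintro ⟨i, r'⟩ hu ⟨j, s⟩ hv h
      simp only [hS, Set.mem_setOf_eq, Prod.mk.injEq] at hu hv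
      rcases hu with ⟨hi, hr1, hr2⟩ | (⟨hi, h'⟩ | (⟨hi, h'⟩ | (⟨hi, h'⟩ | ⟨hi, h'⟩))) <;>
        rcases hv with ⟨hj, hs1, hs2⟩ | (⟨hj, h''⟩ | (⟨hj, h''⟩ | (⟨hj, h''⟩ | ⟨hj, h''⟩))) <;>
        simp_all [Prod.ext_iff, hpq, Ne.symm hpq]
  have h2 : 2 ≤ numComp G S := by omega
  have hineq := hT S h2
  have h3 : ((n:ℝ)+1)/3 * 4 ≤ ((n:ℝ)+1)/3 * (numComp G S : ℝ) := by
    apply mul_le_mul_of_nonneg_left (by exact_mod_cast hω) (by positivity)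
  have hcard' : (S.ncard : ℝ) ≤ (n : ℝ) + 2 := by exact_mod_cast hcard
  have heq : ((n:ℝ)+1)/3 * 4 = (4*(n:ℝ)+4)/3 := by ring
  have hn' : (3:ℝ) ≤ (n:ℝ) := by exact_mod_cast hn
  linarith

/-- for `n ≥ 3`, the Cartesian product `K_n □ P_3` is a
non-regular, minimally `(n+1)/3`-tough graph with minimum degree `n` and
maximum degree `n + 1`. -/
theorem knp3_minimally_tough (n : ℕ) (hn : 3 ≤ n) :
    (∃ v w, ndeg (knp3 n) v ≠ ndeg (knp3 n) w) ∧
    MinTough (((n : ℝ) + 1) / 3) (knp3 n) ∧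
    ((∀ v, n ≤ ndeg (knp3 n) v) ∧ (∃ v, ndeg (knp3 n) v = n)) ∧
    ((∀ v, ndeg (knp3 n) v ≤ n + 1) ∧ (∃ v, ndeg (knp3 n) v = n + 1)) := by
  have hn1 : 1 ≤ n := by omega
  have p0 : Fin n := ⟨0, by omega⟩
  refine ⟨⟨((0 : Fin 3), p0), ((1 : Fin 3), p0), ?_⟩, ⟨knp3_tough hn, ?_⟩, ⟨?_, ?_⟩, ⟨?_, ?_⟩⟩
  · rw [ndeg0 hn1, ndeg1 hn1]; omega
  · intro e he
    induction e using Sym2.ind with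
    | _ a b =>
      rw [mem_edgeSet] at he
      obtain ⟨i, r⟩ := a
      obtain ⟨j, s⟩ := b
      obtain ⟨hne, h⟩ := knp3_adj.mp he
      rcases h with ⟨rfl, hrs⟩ | ⟨rfl, hv⟩
      · fin_cases i
        · exact cert_row0 hn r s hrs
        · exact cert_row1 hn r s hrs
        · exact cert_row2 hn r s hrs
      · fin_cases i <;> fin_cases j <;> simp only [Fin.isValue] at hv ⊢
        · omega
        · exact cert_v01 hn r
        · omega
        · rw [Sym2.eq_swap]; exact cert_v01 hn r
        · omega
        · exact cert_v12 hn r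
        · omega
        · rw [Sym2.eq_swap]; exact cert_v12 hn r
        · omega
  · rintro ⟨i, p⟩
    fin_cases i
    · show n ≤ ndeg (knp3 n) ((0 : Fin 3), p); rw [ndeg0 hn1]
    · show n ≤ ndeg (knp3 n) ((1 : Fin 3), p); rw [ndeg1 hn1]; omega
    · show n ≤ ndeg (knp3 n) ((2 : Fin 3), p); rw [ndeg2 hn1]
  · exact ⟨((0 : Fin 3), p0), ndeg0 hn1 p0⟩
  · rintro ⟨i, p⟩
    fin_cases i
    · show ndeg (knp3 n) ((0 : Fin 3), p) ≤ n + 1; rw [ndeg0 hn1]; omega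
    · show ndeg (knp3 n) ((1 : Fin 3), p) ≤ n + 1; rw [ndeg1 hn1]
    · show ndeg (knp3 n) ((2 : Fin 3), p) ≤ n + 1; rw [ndeg2 hn1]; omega
  · exact ⟨((1 : Fin 3), p0), ndeg1 hn1 p0⟩
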